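/- Let ν = (μ/α²)(√(d₀γμ) + √((α+d₀)(α+γμ)))². If β = ν, then W has exactly two fixed points in the nonnegative quadrant: (0,0) and (x₁*, y₁*), where x₁* = √(γμ(α+d₀)/(d₀(α+γμ))) and y₁* = αx₁*/(μ(1+x₁*)). -/

import Mathlib

set_option maxHeartbeats 1000000


/-- If `β = ν` then `W` has exactly two fixed points in the nonnegative quadrant. -/
theorem stmt_3 (α β γ μ d₀ : ℝ)
    (hα : 0 < α) (hβ : 0 < β) (hγ : 0 < γ) (hμ0 : 0 < μ) (hμ1 : μ ≤ 1)
    (hd₀ : 0 < d₀) (hαd : α + d₀ ≤ 1)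
    (hβν : β = μ / α ^ 2 *
      (Real.sqrt (d₀ * γ * μ) + Real.sqrt ((α + d₀) * (α + γ * μ))) ^ 2)
    (x₁ y₁ : ℝ)
    (hx₁ : x₁ = Real.sqrt (γ * μ * (α + d₀) / (d₀ * (α + γ * μ))))
    (hy₁ : y₁ = α * x₁ / (μ * (1 + x₁))) :
    ∀ x y : ℝ, 0 ≤ x → 0 ≤ y →
      ((β * y ^ 2 / (γ + y) + (1 - d₀ - α / (1 + x)) * x = x ∧
        α * x / (1 + x) + (1 - μ) * y = y) ↔
        ((x = 0 ∧ y = 0) ∨ (x = x₁ ∧ y = y₁))) := by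
  set u := Real.sqrt (d₀ * (α + γ * μ)) with hu_def
  set v := Real.sqrt (γ * μ * (α + d₀)) with hv_def
  have hupos₀ : (0:ℝ) < d₀ * (α + γ * μ) := by positivity
  have hvpos₀ : (0:ℝ) < γ * μ * (α + d₀) := by positivity
  have hu : 0 < u := Real.sqrt_pos.mpr hupos₀
  have hv : 0 < v := Real.sqrt_pos.mpr hvpos₀
  have hu2 : u ^ 2 = d₀ * (α + γ * μ) := Real.sq_sqrt hupos₀.le
  have hv2 : v ^ 2 = γ * μ * (α + d₀) := Real.sq_sqrt hvpos₀.le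
  -- x₁ = v / u
  have hx₁v : x₁ = v / u := by
    rw [hx₁, hu_def, hv_def, ← Real.sqrt_div hvpos₀.le]
  have hx₁pos : 0 < x₁ := by rw [hx₁v]; positivity
  have hux : u * x₁ = v := by
    rw [hx₁v]; field_simp
  -- sqrt product identity
  have hst : Real.sqrt (d₀ * γ * μ) * Real.sqrt ((α + d₀) * (α + γ * μ)) = u * v := by
    rw [hu_def, hv_def, ← Real.sqrt_mul (by positivity), ← Real.sqrt_mul (by positivity)]
    ring_nf
  have hs2 : Real.sqrt (d₀ * γ * μ) ^ 2 = d₀ * γ * μ := Real.sq_sqrt (by positivity)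
  have ht2 : Real.sqrt ((α + d₀) * (α + γ * μ)) ^ 2 = (α + d₀) * (α + γ * μ) :=
    Real.sq_sqrt (by positivity)
  have hβcomb : β * α ^ 2 =
      μ * (2 * d₀ * γ * μ + α ^ 2 + α * γ * μ + α * d₀) + 2 * μ * (u * v) := by
    have hα2 : (α:ℝ) ^ 2 ≠ 0 := by positivity
    have e1 : β * α ^ 2 =
        μ * (Real.sqrt (d₀ * γ * μ) + Real.sqrt ((α + d₀) * (α + γ * μ))) ^ 2 := by
      rw [hβν, div_mul_eq_mul_div, div_mul_cancel₀ _ hα2]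
    linear_combination e1 + μ * hs2 + μ * ht2 + 2 * μ * hst
  intro x y hx hy
  have h1x : (0:ℝ) < 1 + x := by linarith
  have h1x₁ : (0:ℝ) < 1 + x₁ := by linarith
  have hy₁pos : 0 < y₁ := by rw [hy₁]; positivity
  constructor
  · rintro ⟨h1, h2⟩
    -- second equation gives α x = μ y (1+x)
    have H2 : α * x = μ * y * (1 + x) := by
      have : α * x / (1 + x) = μ * y := by linarith
      field_simp at this
      linarith
    by_cases hx0 : x = 0
    · left
      subst hx0
      constructor
      · rfl
      · have : μ * y = 0 := by nlinarith [H2]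
        have := mul_eq_zero.mp this
        rcases this with h | h
        · exact absurd h (ne_of_gt hμ0)
        · exact h
    · right
      have hxpos : 0 < x := lt_of_le_of_ne hx (Ne.symm hx0)
      have hypos : 0 < y := by nlinarith [mul_pos hμ0 h1x, mul_pos hα hxpos]
      have hγy : (0:ℝ) < γ + y := by linarith
      -- clear denominators in h1
      have H1 : β * y ^ 2 * (1 + x) + (1 - d₀) * x * (γ + y) * (1 + x)
          - α * x * (γ + y) = x * (γ + y) * (1 + x) := by
        have e := h1
        field_simp at e
        linarith [e]
      -- key quadratic
      have KEY : β * α ^ 2 * x ^ 2 =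
          μ * x * (d₀ * (1 + x) + α) * (γ * μ * (1 + x) + α * x) := by
        linear_combination (μ ^ 2 * (1 + x)) * H1 +
          (β * (α * x + μ * y * (1 + x)) - μ * x * (d₀ * (1 + x) + α)) * H2
      have hquad : μ * (u * x - v) ^ 2 * x = 0 := by
        linear_combination (μ * x ^ 3) * hu2 + (μ * x) * hv2 + (x ^ 2) * hβcomb - KEY
      have hsq : (u * x - v) ^ 2 = 0 := by
        rcases mul_eq_zero.mp hquad with h | h
        · rcases mul_eq_zero.mp h with h' | h'
          · exact absurd h' (ne_of_gt hμ0)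
          · exact h'
        · exact absurd h hx0
      have hxv : u * x = v := by
        have := pow_eq_zero_iff (n := 2) (by norm_num) |>.mp hsq
        linarith
      have hxx₁ : x = x₁ := by
        rw [hx₁v]
        field_simp
        linarith [hxv]
      refine ⟨hxx₁, ?_⟩
      rw [hy₁, ← hxx₁]
      rw [eq_div_iff (by positivity)]
      linarith [H2]
  · rintro (⟨hx0, hy0⟩ | ⟨hxx, hyy⟩)
    · subst hx0; subst hy0
      constructor
      · simp
      · simp
    · rw [hxx, hyy]
      have hμx : μ * (1 + x₁) ≠ 0 := by positivity
      constructor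
      · -- first equation at (x₁, y₁)
        have KEY : β * α ^ 2 * x₁ ^ 2 =
            μ * x₁ * (d₀ * (1 + x₁) + α) * (γ * μ * (1 + x₁) + α * x₁) := by
          have h0 : μ * (u * x₁ - v) ^ 2 * x₁ = 0 := by
            rw [hux]; ring
          linear_combination (μ * x₁ ^ 3) * hu2 + (μ * x₁) * hv2 +
            (x₁ ^ 2) * hβcomb - h0
        rw [hy₁]
        have hγy : (0:ℝ) < γ + α * x₁ / (μ * (1 + x₁)) := by positivity
        field_simp
        have K2 : β * α ^ 2 * x₁ = μ * (d₀ * (1 + x₁) + α) * (γ * μ * (1 + x₁) + α * x₁) := by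
          apply mul_left_cancel₀ (ne_of_gt hx₁pos); linear_combination KEY
        linear_combination K2
      · rw [hy₁]
        field_simp
        ring
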